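/- Let H be a real Hilbert space and B : H → H a bounded self-adjoint operator with B ≥ 0. Then B is coercive on (ker B)^⊥ (i.e., there exists β > 0 with ⟨Bx,x⟩ ≥ β‖x‖² for all x ∈ (ker B)^⊥) if and only if B has closed range. -/

import Mathlib

open RealInnerProductSpace

section Aux
variable {H : Type*} [NormedAddCommGroup H] [InnerProductSpace ℝ H]
    [CompleteSpace H] (B : H →L[ℝ] H)

/-- Cauchy–Schwarz for a positive symmetric operator. -/
lemma aux_cs (hsa : ∀ x y : H, ⟪B x, y⟫ = ⟪x, B y⟫)
    (hpos : ∀ x : H, 0 ≤ ⟪B x, x⟫) (x y : H) :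
    ⟪B x, y⟫ ^ 2 ≤ ⟪B x, x⟫ * ⟪B y, y⟫ := by
  have h : ∀ t : ℝ, 0 ≤ ⟪B y, y⟫ * (t * t) + (2 * ⟪B x, y⟫) * t + ⟪B x, x⟫ := by
    intro t
    have h0 := hpos (x + t • y)
    have e1 : ⟪B y, x⟫ = ⟪B x, y⟫ := by rw [hsa y x, real_inner_comm]
    rw [map_add, map_smul] at h0
    rw [inner_add_left, inner_add_right, inner_add_right,
      inner_smul_left, inner_smul_right, inner_smul_right, inner_smul_left] at h0
    simp only [starRingEnd_apply, star_trivial] at h0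
    rw [e1] at h0
    linarith
  have hd := discrim_le_zero h
  rw [discrim] at hd
  nlinarith [hd]

lemma aux_norm_sq_le (hsa : ∀ x y : H, ⟪B x, y⟫ = ⟪x, B y⟫)
    (hpos : ∀ x : H, 0 ≤ ⟪B x, x⟫) (x : H) :
    ‖B x‖ ^ 2 ≤ ‖B‖ * ⟪B x, x⟫ := by
  have h1 := aux_cs B hsa hpos x (B x)
  have h2 : ⟪B (B x), B x⟫ ≤ ‖B‖ * ‖B x‖ * ‖B x‖ := by
    calc ⟪B (B x), B x⟫ ≤ ‖B (B x)‖ * ‖B x‖ := real_inner_le_norm _ _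
    _ ≤ ‖B‖ * ‖B x‖ * ‖B x‖ := by
        have := B.le_opNorm (B x)
        nlinarith [norm_nonneg (B x)]
  have h3 : ⟪B x, B x⟫ = ‖B x‖ ^ 2 := real_inner_self_eq_norm_sq _
  have h4 : ⟪B x, x⟫ * ⟪B (B x), B x⟫ ≤ ⟪B x, x⟫ * (‖B‖ * ‖B x‖ * ‖B x‖) :=
    mul_le_mul_of_nonneg_left h2 (hpos x)
  rcases eq_or_lt_of_le (norm_nonneg (B x)) with h0 | h0
  · nlinarith [hpos x, norm_nonneg B]
  · have h5 : ‖B x‖ ^ 2 * ‖B x‖ ^ 2 ≤ (‖B‖ * ⟪B x, x⟫) * ‖B x‖ ^ 2 := by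
      nlinarith [h1, h4, h3]
    exact le_of_mul_le_mul_right h5 (by positivity)

lemma aux_orth_range (hsa : ∀ x y : H, ⟪B x, y⟫ = ⟪x, B y⟫) :
    (LinearMap.range (B : H →ₗ[ℝ] H))ᗮ = LinearMap.ker (B : H →ₗ[ℝ] H) := by
  ext x
  rw [Submodule.mem_orthogonal, LinearMap.mem_ker]
  constructor
  · intro h
    have h2 : ⟪B x, B x⟫ = 0 := by
      have := h (B (B x)) ⟨B x, rfl⟩
      rwa [hsa (B x) x] at this
    rwa [inner_self_eq_zero] at h2
  · rintro h u ⟨y, rfl⟩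
    rw [show (B : H →ₗ[ℝ] H) y = B y from rfl, hsa, show B x = 0 from h, inner_zero_right]

lemma aux_closure_range (hsa : ∀ x y : H, ⟪B x, y⟫ = ⟪x, B y⟫) :
    (LinearMap.ker (B : H →ₗ[ℝ] H) : Submodule ℝ H)ᗮ = (LinearMap.range (B : H →ₗ[ℝ] H)).topologicalClosure := by
  rw [← aux_orth_range B hsa, Submodule.orthogonal_orthogonal_eq_closure]

end Aux

/-- For a bounded self-adjoint `B ≥ 0` on a real Hilbert space, `B` is coercive
on `(ker B)ᗮ` iff `B` has closed range. -/
theorem stmt_7 {H : Type*} [NormedAddCommGroup H] [InnerProductSpace ℝ H]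
    [CompleteSpace H] (B : H →L[ℝ] H)
    (hsa : ∀ x y : H, ⟪B x, y⟫ = ⟪x, B y⟫)
    (hpos : ∀ x : H, 0 ≤ ⟪B x, x⟫) :
    (∃ β > 0, ∀ x ∈ (LinearMap.ker (B : H →ₗ[ℝ] H))ᗮ, β * ‖x‖ ^ 2 ≤ ⟪B x, x⟫) ↔
      IsClosed (LinearMap.range (B : H →ₗ[ℝ] H) : Set H) := by
  set K : Submodule ℝ H := (LinearMap.ker (B : H →ₗ[ℝ] H))ᗮ with hK
  have hKclosed : IsClosed (K : Set H) := Submodule.isClosed_orthogonal _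
  haveI : CompleteSpace K := hKclosed.completeSpace_coe
  -- every element of range B is B of an element of K
  have hproj : ∀ x : H, ∃ v ∈ K, B v = B x := by
    intro x
    haveI : CompleteSpace (LinearMap.ker (B : H →ₗ[ℝ] H)) :=
      (ContinuousLinearMap.isClosed_ker B).completeSpace_coe
    obtain ⟨u, hu, v, hv, huv⟩ := Submodule.exists_add_mem_mem_orthogonal
      (K := (LinearMap.ker (B : H →ₗ[ℝ] H) : Submodule ℝ H)) x
    refine ⟨v, hv, ?_⟩
    rw [huv, map_add, show B u = 0 from LinearMap.mem_ker.mp hu, zero_add]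
  constructor
  · -- coercive ⇒ closed range
    rintro ⟨β, hβ, hco⟩
    have hbb : ∀ x : H, x ∈ K → ‖x‖ ≤ β⁻¹ * ‖B x‖ := by
      intro x hx
      rcases eq_or_lt_of_le (norm_nonneg x) with h0 | h0
      · rw [← h0]; positivity
      · have h1 := hco x hx
        have h2 : ⟪B x, x⟫ ≤ ‖B x‖ * ‖x‖ := real_inner_le_norm _ _
        rw [le_inv_mul_iff₀ hβ]
        nlinarith
    have hres : (LinearMap.range (B : H →ₗ[ℝ] H) : Set H) =
        Set.range ((B.comp K.subtypeL : K →L[ℝ] H)) := by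
      ext y
      constructor
      · rintro ⟨x, rfl⟩
        obtain ⟨v, hv, hBv⟩ := hproj x
        exact ⟨⟨v, hv⟩, hBv⟩
      · rintro ⟨⟨v, hv⟩, rfl⟩
        exact ⟨v, rfl⟩
    rw [hres]
    have hanti : AntilipschitzWith (β⁻¹.toNNReal) (B.comp K.subtypeL) := by
      apply ContinuousLinearMap.antilipschitz_of_bound
      intro x
      have := hbb x x.2
      rw [Real.coe_toNNReal _ (by positivity)]
      exact this
    exact hanti.isClosed_range (B.comp K.subtypeL).uniformContinuous
  · -- closed range ⇒ coercive
    intro hclosed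
    by_cases hB0 : B = 0
    · refine ⟨1, one_pos, ?_⟩
      intro x hx
      have hxk : x ∈ LinearMap.ker (B : H →ₗ[ℝ] H) := by
        rw [LinearMap.mem_ker, hB0]; rfl
      have h0 : ⟪x, x⟫ = 0 := (Submodule.mem_orthogonal _ _).mp hx x hxk
      have hz : x = (0 : H) := by rwa [inner_self_eq_zero] at h0
      simp [hz]
    · have hrange : LinearMap.range (B : H →ₗ[ℝ] H) = K := by
        rw [hK, aux_closure_range B hsa,
          (IsClosed.submodule_topologicalClosure_eq hclosed)]
      have hmem : ∀ x : K, B x ∈ K := by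
        intro x
        have h : B (x : H) ∈ LinearMap.range (B : H →ₗ[ℝ] H) := ⟨x, rfl⟩
        rwa [hrange] at h
      set T : K →L[ℝ] K := (B.comp K.subtypeL).codRestrict K hmem with hT
      have hTinj : LinearMap.ker (T : K →ₗ[ℝ] K) = ⊥ := by
        rw [Submodule.eq_bot_iff]
        rintro ⟨x, hx⟩ hz
        have hBx : B x = 0 := congrArg Subtype.val (LinearMap.mem_ker.mp hz)
        have hker : x ∈ LinearMap.ker (B : H →ₗ[ℝ] H) := LinearMap.mem_ker.mpr hBx
        have h0 : ⟪x, x⟫ = 0 := (Submodule.mem_orthogonal _ _).mp hx _ hker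
        exact Subtype.ext (by rwa [inner_self_eq_zero] at h0)
      have hTsurj : LinearMap.range (T : K →ₗ[ℝ] K) = ⊤ := by
        rw [Submodule.eq_top_iff']
        rintro ⟨y, hy⟩
        rw [← hrange] at hy
        obtain ⟨x, rfl⟩ := hy
        obtain ⟨v, hv, hBv⟩ := hproj x
        exact ⟨⟨v, hv⟩, Subtype.ext hBv⟩
      let e := ContinuousLinearEquiv.ofBijective T hTinj hTsurj
      set C : ℝ := ‖(e.symm : K →L[ℝ] K)‖ + 1 with hC
      have hCpos : 0 < C := by
        have := norm_nonneg (e.symm : K →L[ℝ] K)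
        linarith
      have hbound : ∀ x : K, ‖(x : H)‖ ≤ C * ‖B (x : H)‖ := by
        intro x
        have h1 : x = e.symm (e x) := (e.symm_apply_apply x).symm
        have h2 : ‖e.symm (e x)‖ ≤ ‖(e.symm : K →L[ℝ] K)‖ * ‖e x‖ :=
          (e.symm : K →L[ℝ] K).le_opNorm (e x)
        have h3 : (e x : H) = B (x : H) := rfl
        have h4 : ‖e x‖ = ‖B (x : H)‖ := by rw [← h3]; rfl
        calc ‖(x : H)‖ = ‖x‖ := rfl
          _ = ‖e.symm (e x)‖ := by rw [← h1]
          _ ≤ ‖(e.symm : K →L[ℝ] K)‖ * ‖e x‖ := h2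
          _ ≤ C * ‖B (x : H)‖ := by
              rw [h4]
              apply mul_le_mul_of_nonneg_right _ (norm_nonneg _)
              rw [hC]
              linarith
      have hBnorm : 0 < ‖B‖ := norm_pos_iff.mpr hB0
      refine ⟨(C ^ 2 * ‖B‖)⁻¹, by positivity, ?_⟩
      intro x hx
      have h1 := hbound ⟨x, hx⟩
      simp only at h1
      have h2 := aux_norm_sq_le B hsa hpos x
      rw [inv_mul_le_iff₀ (by positivity)]
      calc ‖x‖ ^ 2 ≤ (C * ‖B x‖) ^ 2 := by
            apply pow_le_pow_left₀ (norm_nonneg x) h1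
        _ = C ^ 2 * ‖B x‖ ^ 2 := by ring
        _ ≤ C ^ 2 * (‖B‖ * ⟪B x, x⟫) := by
            apply mul_le_mul_of_nonneg_left h2 (by positivity)
        _ = C ^ 2 * ‖B‖ * ⟪B x, x⟫ := by ring
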